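/- Denoising score trick: Fix d ≥ 1, σ > 0, t > 0 and set σ_t := σ·√(1 − e^{−2t}). Let X be a random vector on ℝ^d with density p⋆, let Z ~ N(0, I_d) be a standard Gaussian vector independent of X, and set X_t := e^{−t}·X + σ_t·Z, whose density is p_t; let s⋆(t,·) := ∇ log p_t. Assume E‖s⋆(t, X_t)‖² < ∞. Then there exists a real constant C, depending only on p⋆, σ_t and d, such that for every measurable s : ℝ^d → ℝ^d with E‖s(X_t)‖² < ∞, one has E[‖s⋆(t, X_t) − s(X_t)‖²] = E[‖s(X_t) + Z/σ_t‖²] + C. -/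

import Mathlib

open MeasureTheory Real Set

noncomputable section

/-- `ℝ^d` with the Euclidean structure. -/
abbrev Euc (d : ℕ) := EuclideanSpace ℝ (Fin d)

/-- Density of the standard Gaussian `N(0, I_d)` on `ℝ^d`. -/
def gaussDensity (d : ℕ) (z : Euc d) : ℝ :=
  (2 * π) ^ (-(d : ℝ) / 2) * Real.exp (-‖z‖ ^ 2 / 2)

/-- `σ_t = σ √(1 - e^{-2t})`. -/
def sigmaT (σ t : ℝ) : ℝ := σ * Real.sqrt (1 - Real.exp (-2 * t))

/-- Density `p_t` of `e^{-t} X + σ_t Z`, where `X` has density `p` and `Z ~ N(0, I_d)`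
is independent of `X`. -/
def ptDensity (d : ℕ) (σ : ℝ) (p : Euc d → ℝ) (t : ℝ) (y : Euc d) : ℝ :=
  ∫ x : Euc d, p x * (2 * π * sigmaT σ t ^ 2) ^ (-(d : ℝ) / 2) *
    Real.exp (-‖y - Real.exp (-t) • x‖ ^ 2 / (2 * sigmaT σ t ^ 2))

/-- Score function `s⋆(t, x) = ∇ log p_t(x)`. -/
def score (d : ℕ) (σ : ℝ) (p : Euc d → ℝ) (t : ℝ) (x : Euc d) : Euc d :=
  gradient (fun y => Real.log (ptDensity d σ p t y)) x

/-- `p` is a probability density on `ℝ^d`. -/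
def IsProbDensity (d : ℕ) (p : Euc d → ℝ) : Prop :=
  (∀ x, 0 ≤ p x) ∧ Measurable p ∧ (∫ x, p x) = 1

namespace DST

/-- Basic bound `u e^{-u²/(2s²)} ≤ s`. -/
lemma mul_exp_bound {s : ℝ} (hs : 0 < s) {u : ℝ} (hu : 0 ≤ u) :
    u * rexp (-u ^ 2 / (2 * s ^ 2)) ≤ s := by
  have h := Real.add_one_le_exp (u ^ 2 / (2 * s ^ 2))
  have hexp : 0 < rexp (u ^ 2 / (2 * s ^ 2)) := Real.exp_pos _
  have hX : 2 * s ^ 2 * (u ^ 2 / (2 * s ^ 2)) = u ^ 2 := by field_simp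
  have key : u ≤ s * rexp (u ^ 2 / (2 * s ^ 2)) := by
    nlinarith [sq_nonneg (u - s),
      mul_le_mul_of_nonneg_left h (by positivity : (0:ℝ) ≤ 2 * s ^ 2), hX, hs]
  have : rexp (-u ^ 2 / (2 * s ^ 2)) = (rexp (u ^ 2 / (2 * s ^ 2)))⁻¹ := by
    rw [← Real.exp_neg]; ring_nf
  rw [this]
  rw [mul_inv_le_iff₀ hexp]
  linarith [key]

lemma mul_exp_le_one {x : ℝ} (hx : 0 ≤ x) : x * rexp (-x) ≤ 1 := by
  have h := Real.add_one_le_exp x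
  have hexp : 0 < rexp x := Real.exp_pos _
  have : rexp (-x) = (rexp x)⁻¹ := Real.exp_neg x
  rw [this, mul_inv_le_iff₀ hexp]
  linarith

/-- Gaussian-type integrability on `Euc d`. -/
lemma integrable_exp_neg_mul_sq_norm (d : ℕ) {b : ℝ} (hb : 0 < b) :
    Integrable (fun v : Euc d => rexp (-b * ‖v‖ ^ 2)) := by
  have h := (GaussianFourier.integrable_cexp_neg_mul_sq_norm_add
      (V := Euc d) (b := (b : ℂ)) (by simpa using hb) 0 0).norm
  refine h.congr (Filter.Eventually.of_forall fun v => ?_)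
  simp only [inner_zero_left, Complex.ofReal_zero, mul_zero, add_zero]
  rw [Complex.norm_exp,
    show (-(b:ℂ)) * ((‖v‖:ℝ):ℂ) ^ 2 = ((-b * ‖v‖ ^ 2 : ℝ) : ℂ) by push_cast; ring,
    Complex.ofReal_re]

lemma integrable_normsq_mul_exp (d : ℕ) :
    Integrable (fun z : Euc d => ‖z‖ ^ 2 * rexp (-‖z‖ ^ 2 / 2)) := by
  have hint := (integrable_exp_neg_mul_sq_norm d (b := (1/4 : ℝ)) (by norm_num)).const_mul 4
  refine hint.mono' ?_ (Filter.Eventually.of_forall fun z => ?_)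
  · exact ((measurable_norm.pow_const 2).mul
      ((measurable_norm.pow_const 2).neg.div_const 2).exp).aestronglyMeasurable
  · have h1 : 0 ≤ ‖z‖ ^ 2 := sq_nonneg _
    have key : ‖z‖ ^ 2 / 4 * rexp (-(‖z‖ ^ 2 / 4)) ≤ 1 := mul_exp_le_one (by positivity)
    have hsplit : rexp (-‖z‖ ^ 2 / 2) = rexp (-(‖z‖ ^ 2 / 4)) * rexp (-(1/4 : ℝ) * ‖z‖ ^ 2) := by
      rw [← Real.exp_add]; ring_nf
    rw [Real.norm_eq_abs, abs_of_nonneg (by positivity)]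
    rw [hsplit]
    have hexp2 : 0 < rexp (-(1/4 : ℝ) * ‖z‖ ^ 2) := Real.exp_pos _
    calc ‖z‖ ^ 2 * (rexp (-(‖z‖ ^ 2 / 4)) * rexp (-(1/4 : ℝ) * ‖z‖ ^ 2))
        = (‖z‖ ^ 2 / 4 * rexp (-(‖z‖ ^ 2 / 4))) * (4 * rexp (-(1/4 : ℝ) * ‖z‖ ^ 2)) := by ring
      _ ≤ 1 * (4 * rexp (-(1/4 : ℝ) * ‖z‖ ^ 2)) := by
          apply mul_le_mul_of_nonneg_right key (by positivity)
      _ = 4 * rexp (-(1/4 : ℝ) * ‖z‖ ^ 2) := by ring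

lemma gauss_continuous (d : ℕ) : Continuous (gaussDensity d) := by
  unfold gaussDensity
  fun_prop

lemma gauss_nonneg (d : ℕ) (z : Euc d) : 0 ≤ gaussDensity d z := by
  unfold gaussDensity
  positivity

lemma integrable_gauss (d : ℕ) : Integrable (gaussDensity d) := by
  have := (integrable_exp_neg_mul_sq_norm d (b := (1/2 : ℝ)) (by norm_num)).const_mul
      ((2 * π) ^ (-(d : ℝ) / 2))
  refine this.congr (Filter.Eventually.of_forall fun z => ?_)
  unfold gaussDensity
  ring_nf

lemma integrable_normsq_gauss (d : ℕ) :
    Integrable (fun z : Euc d => ‖z‖ ^ 2 * gaussDensity d z) := by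
  have := (integrable_normsq_mul_exp d).const_mul ((2 * π) ^ (-(d : ℝ) / 2))
  refine this.congr (Filter.Eventually.of_forall fun z => ?_)
  unfold gaussDensity
  ring

end DST

namespace DST2
open DST

lemma sigmaT_pos {σ t : ℝ} (hσ : 0 < σ) (ht : 0 < t) : 0 < sigmaT σ t := by
  unfold sigmaT
  apply mul_pos hσ
  apply Real.sqrt_pos.2
  have : rexp (-2 * t) < 1 := by
    rw [Real.exp_lt_one_iff]; nlinarith
  linarith

/-- The Gaussian kernel with variance `st²`. -/
def K (d : ℕ) (st : ℝ) (u : Euc d) : ℝ :=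
  (2 * π * st ^ 2) ^ (-(d : ℝ) / 2) * rexp (-‖u‖ ^ 2 / (2 * st ^ 2))

lemma ptDensity_eq (d : ℕ) (σ : ℝ) (p : Euc d → ℝ) (t : ℝ) (y : Euc d) :
    ptDensity d σ p t y = ∫ x : Euc d, p x * K d (sigmaT σ t) (y - Real.exp (-t) • x) := by
  unfold ptDensity K
  simp only [mul_assoc]

section Kfacts

variable {d : ℕ} {st : ℝ}

lemma c1_pos (hst : 0 < st) : 0 < (2 * π * st ^ 2) ^ (-(d : ℝ) / 2) := by
  have : (0:ℝ) < 2 * π * st ^ 2 := by positivity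
  positivity

lemma K_pos (hst : 0 < st) (u : Euc d) : 0 < K d st u := by
  unfold K
  have := c1_pos (d := d) hst
  positivity

lemma K_cont : Continuous (K d st) := by
  unfold K
  fun_prop

lemma K_le (hst : 0 < st) (u : Euc d) : K d st u ≤ (2 * π * st ^ 2) ^ (-(d : ℝ) / 2) := by
  unfold K
  have h1 : rexp (-‖u‖ ^ 2 / (2 * st ^ 2)) ≤ 1 := by
    apply Real.exp_le_one_iff.2
    have : (0:ℝ) < 2 * st ^ 2 := by positivity
    have := sq_nonneg ‖u‖
    apply div_nonpos_of_nonpos_of_nonneg <;> nlinarith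
  nlinarith [c1_pos (d := d) (st := st) hst]

lemma norm_mul_K_le (hst : 0 < st) (u : Euc d) :
    ‖u‖ * K d st u ≤ (2 * π * st ^ 2) ^ (-(d : ℝ) / 2) * st := by
  unfold K
  have := mul_exp_bound hst (norm_nonneg u)
  nlinarith [c1_pos (d := d) (st := st) hst, Real.exp_pos (-‖u‖ ^ 2 / (2 * st ^ 2)), norm_nonneg u]

/-- `c₁ = (2π)^{-d/2} (st^d)⁻¹`. -/
lemma c1_eq (hst : 0 < st) : (2 * π * st ^ 2) ^ (-(d : ℝ) / 2) = (2 * π) ^ (-(d : ℝ) / 2) * ((st : ℝ) ^ d)⁻¹ := by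
  have h2π : (0:ℝ) ≤ 2 * π := by positivity
  rw [Real.mul_rpow h2π (sq_nonneg st)]
  congr 1
  rw [← Real.rpow_natCast st 2, ← Real.rpow_natCast st d, ← Real.rpow_mul hst.le,
    ← Real.rpow_neg hst.le]
  congr 1
  ring

end Kfacts

section Pfacts

variable {d : ℕ} {p : Euc d → ℝ} (hp0 : ∀ x, 0 ≤ p x) (hpm : Measurable p)
  (hp1 : (∫ x, p x) = 1)

include hp1 in
lemma integrable_p : Integrable p := by
  by_contra h
  rw [integral_undef h] at hp1
  norm_num at hp1

include hp0 hpm hp1 in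
lemma integrable_pK {st : ℝ} (hst : 0 < st) (α : ℝ) (y : Euc d) :
    Integrable (fun x => p x * K d st (y - α • x)) := by
  refine ((integrable_p hp1).const_mul ((2 * π * st ^ 2) ^ (-(d : ℝ) / 2))).mono'
    ?_ (Filter.Eventually.of_forall fun x => ?_)
  · exact (hpm.mul (((K_cont (d := d) (st := st)).measurable).comp
      (measurable_const.sub (measurable_id.const_smul α)))).aestronglyMeasurable
  · rw [Real.norm_eq_abs, abs_of_nonneg (mul_nonneg (hp0 x) (K_pos hst _).le)]
    calc p x * K d st (y - α • x) ≤ p x * (2 * π * st ^ 2) ^ (-(d : ℝ) / 2) :=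
        mul_le_mul_of_nonneg_left (K_le hst _) (hp0 x)
      _ = (2 * π * st ^ 2) ^ (-(d : ℝ) / 2) * p x := by ring

include hp0 hpm hp1 in
lemma pt_pos {σ t : ℝ} (hσ : 0 < σ) (ht : 0 < t) (y : Euc d) :
    0 < ptDensity d σ p t y := by
  have hst := sigmaT_pos hσ ht
  rw [ptDensity_eq]
  have hint : Integrable (fun x => p x * K d (sigmaT σ t) (y - Real.exp (-t) • x)) :=
    integrable_pK hp0 hpm hp1 hst (Real.exp (-t)) y
  have hnn : ∀ x, 0 ≤ p x * K d (sigmaT σ t) (y - Real.exp (-t) • x) :=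
    fun x => mul_nonneg (hp0 x) (K_pos hst _).le
  rw [integral_pos_iff_support_of_nonneg hnn hint]
  have hsupp : Function.support (fun x => p x * K d (sigmaT σ t) (y - Real.exp (-t) • x))
      = Function.support p := by
    ext x
    simp only [Function.mem_support, mul_ne_zero_iff]
    exact ⟨fun h => h.1, fun h => ⟨h, (K_pos hst _).ne'⟩⟩
  rw [hsupp]
  by_contra h
  push_neg at h
  have h0 : volume (Function.support p) = 0 := le_antisymm h zero_le
  have : (∫ x, p x) = 0 := by
    apply integral_eq_zero_of_ae
    have : ∀ᵐ x ∂(volume : Measure (Euc d)), x ∉ Function.support p :=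
      ae_iff.2 (by simp only [not_not]; exact h0)
    filter_upwards [this] with x hx
    simpa [Function.mem_support] using hx
  norm_num [this] at hp1

end Pfacts
end DST2

namespace DST3
open DST DST2

variable {d : ℕ}

local notation "⟪" x ", " y "⟫" => @inner ℝ _ _ x y

/-- The vector field `∇ p_t`. -/
def Vfield (d : ℕ) (σ : ℝ) (p : Euc d → ℝ) (t : ℝ) (y : Euc d) : Euc d :=
  ∫ x : Euc d, (-(sigmaT σ t ^ 2)⁻¹ * (p x * K d (sigmaT σ t) (y - Real.exp (-t) • x)))
    • (y - Real.exp (-t) • x)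

section

variable {p : Euc d → ℝ} (hp0 : ∀ x, 0 ≤ p x) (hpm : Measurable p)
  (hp1 : (∫ x, p x) = 1) {σ t : ℝ} (hσ : 0 < σ) (ht : 0 < t)

include hp0 hpm hp1 hσ ht

lemma integrable_Vint (y : Euc d) :
    Integrable (fun x : Euc d =>
      (-(sigmaT σ t ^ 2)⁻¹ * (p x * K d (sigmaT σ t) (y - Real.exp (-t) • x)))
        • (y - Real.exp (-t) • x)) := by
  set st := sigmaT σ t with hst_def
  have hst : 0 < st := sigmaT_pos hσ ht
  set c1 : ℝ := (2 * π * st ^ 2) ^ (-(d : ℝ) / 2) with hc1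
  refine ((integrable_p hp1).const_mul ((st ^ 2)⁻¹ * (c1 * st))).mono'
    ?_ (Filter.Eventually.of_forall fun x => ?_)
  · apply AEStronglyMeasurable.fun_smul
    · exact ((hpm.mul (((K_cont (d := d) (st := st)).measurable).comp
        (measurable_const.sub (measurable_id.const_smul (Real.exp (-t)))))).const_mul
        (-(st ^ 2)⁻¹)).aestronglyMeasurable
    · exact (continuous_const.sub (continuous_id.const_smul (Real.exp (-t)))).aestronglyMeasurable
  · rw [norm_smul, Real.norm_eq_abs]
    have hKpos := K_pos (d := d) hst (y - Real.exp (-t) • x)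
    have habs : |(-(st ^ 2)⁻¹ * (p x * K d st (y - Real.exp (-t) • x)))|
        = (st ^ 2)⁻¹ * (p x * K d st (y - Real.exp (-t) • x)) := by
      have hnn : 0 ≤ (st ^ 2)⁻¹ * (p x * K d st (y - Real.exp (-t) • x)) := by
        have := hp0 x; positivity
      rw [abs_of_nonpos (by linarith)]
      ring
    rw [habs]
    have hb := norm_mul_K_le (d := d) hst (y - Real.exp (-t) • x)
    have h2 : p x * (K d st (y - Real.exp (-t) • x) * ‖y - Real.exp (-t) • x‖) ≤ p x * (c1 * st) :=
      mul_le_mul_of_nonneg_left (by nlinarith) (hp0 x)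
    calc (st ^ 2)⁻¹ * (p x * K d st (y - Real.exp (-t) • x)) * ‖y - Real.exp (-t) • x‖
        = (st ^ 2)⁻¹ * (p x * (K d st (y - Real.exp (-t) • x) * ‖y - Real.exp (-t) • x‖)) := by
          ring
      _ ≤ (st ^ 2)⁻¹ * (p x * (c1 * st)) := by
          apply mul_le_mul_of_nonneg_left h2 (by positivity)
      _ = (st ^ 2)⁻¹ * (c1 * st) * p x := by ring

omit hp0 hpm hp1 hσ ht in
lemma hasFDerivAt_K {st : ℝ} (hst : 0 < st) (x : Euc d) (α : ℝ) (y : Euc d) :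
    HasFDerivAt (fun y : Euc d => p x * K d st (y - α • x))
      ((-(st ^ 2)⁻¹ * (p x * K d st (y - α • x))) • innerSL ℝ (y - α • x)) y := by
  set c1 : ℝ := (2 * π * st ^ 2) ^ (-(d : ℝ) / 2) with hc1
  have hsub : HasFDerivAt (fun y : Euc d => y - α • x) (ContinuousLinearMap.id ℝ (Euc d)) y := by
    simpa using (hasFDerivAt_id y).sub_const (α • x)
  have hinner := hsub.inner ℝ hsub
  have hscaled := (hinner.const_mul (-(2 * st ^ 2)⁻¹)).exp.const_mul (p x * c1)
  have hfun : (fun y : Euc d => p x * K d st (y - α • x))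
      = fun y : Euc d => (p x * c1) *
          rexp ((-(2 * st ^ 2)⁻¹) * ⟪y - α • x, y - α • x⟫) := by
    funext z
    rw [real_inner_self_eq_norm_sq]
    unfold K
    rw [← hc1]
    have : (-(2 * st ^ 2)⁻¹) * ‖z - α • x‖ ^ 2 = -‖z - α • x‖ ^ 2 / (2 * st ^ 2) := by
      field_simp
    rw [this]; ring
  rw [hfun]
  refine hscaled.congr_fderiv ?_
  symm
  apply ContinuousLinearMap.ext
  intro v
  simp only [ContinuousLinearMap.smul_apply, innerSL_apply_apply, ContinuousLinearMap.coe_comp',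
    Function.comp_apply, ContinuousLinearMap.prod_apply, ContinuousLinearMap.coe_id', id_eq,
    fderivInnerCLM_apply, smul_eq_mul]
  rw [real_inner_self_eq_norm_sq, real_inner_comm (v) (y - α • x)]
  unfold K
  rw [← hc1]
  have : (-(2 * st ^ 2)⁻¹) * ‖y - α • x‖ ^ 2 = -‖y - α • x‖ ^ 2 / (2 * st ^ 2) := by
    field_simp
  rw [this]
  ring

set_option synthInstance.maxHeartbeats 1000000 in
lemma hasGradientAt_pt (y₀ : Euc d) :
    HasGradientAt (ptDensity d σ p t) (Vfield d σ p t y₀) y₀ := by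
  set st := sigmaT σ t with hst_def
  have hst : 0 < st := sigmaT_pos hσ ht
  set α := Real.exp (-t) with hα
  set c1 : ℝ := (2 * π * st ^ 2) ^ (-(d : ℝ) / 2) with hc1
  have key : HasFDerivAt (fun y => ∫ x : Euc d, p x * K d st (y - α • x))
      (∫ x : Euc d, (-(st ^ 2)⁻¹ * (p x * K d st (y₀ - α • x))) • innerSL ℝ (y₀ - α • x)) y₀ := by
    apply hasFDerivAt_integral_of_dominated_of_fderiv_le
      (F' := fun y x => (-(st ^ 2)⁻¹ * (p x * K d st (y - α • x))) • innerSL ℝ (y - α • x))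
      (bound := fun x => (st ^ 2)⁻¹ * (c1 * st) * p x) (s := Metric.ball y₀ 1) (Metric.ball_mem_nhds y₀ one_pos)
    · apply Filter.Eventually.of_forall
      intro y
      exact (hpm.mul (((K_cont (d := d) (st := st)).measurable).comp
        (measurable_const.sub (measurable_id.const_smul α)))).aestronglyMeasurable
    · exact integrable_pK hp0 hpm hp1 hst α y₀
    · apply AEStronglyMeasurable.fun_smul
      · exact ((hpm.mul (((K_cont (d := d) (st := st)).measurable).comp
          (measurable_const.sub (measurable_id.const_smul α)))).const_mul
          (-(st ^ 2)⁻¹)).aestronglyMeasurable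
      · exact ((innerSL ℝ (E := Euc d)).continuous.comp
          (continuous_const.sub (continuous_id.const_smul α))).aestronglyMeasurable
    · apply Filter.Eventually.of_forall
      intro x y _
      rw [norm_smul (-(st ^ 2)⁻¹ * (p x * K d st (y - α • x))) ((innerSL ℝ) (y - α • x)),
        Real.norm_eq_abs, innerSL_apply_norm]
      have hKpos := K_pos (d := d) hst (y - α • x)
      have habs : |(-(st ^ 2)⁻¹ * (p x * K d st (y - α • x)))|
          = (st ^ 2)⁻¹ * (p x * K d st (y - α • x)) := by
        have hnn : 0 ≤ (st ^ 2)⁻¹ * (p x * K d st (y - α • x)) := by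
          have := hp0 x; positivity
        rw [abs_of_nonpos (by linarith)]
        ring
      rw [habs]
      have hb := norm_mul_K_le (d := d) hst (y - α • x)
      have h2 : p x * (K d st (y - α • x) * ‖y - α • x‖) ≤ p x * (c1 * st) :=
        mul_le_mul_of_nonneg_left (by nlinarith) (hp0 x)
      calc (st ^ 2)⁻¹ * (p x * K d st (y - α • x)) * ‖y - α • x‖
          = (st ^ 2)⁻¹ * (p x * (K d st (y - α • x) * ‖y - α • x‖)) := by ring
        _ ≤ (st ^ 2)⁻¹ * (p x * (c1 * st)) := by
            apply mul_le_mul_of_nonneg_left h2 (by positivity)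
        _ = (st ^ 2)⁻¹ * (c1 * st) * p x := by ring
    · exact ((integrable_p hp1).const_mul _)
    · apply Filter.Eventually.of_forall
      intro x y _
      exact hasFDerivAt_K hst x α y
  have hptf : ptDensity d σ p t = fun y => ∫ x : Euc d, p x * K d st (y - α • x) := by
    funext y; exact ptDensity_eq d σ p t y
  have hint_eq : (∫ x : Euc d, (-(st ^ 2)⁻¹ * (p x * K d st (y₀ - α • x)))
        • innerSL ℝ (y₀ - α • x))
      = innerSL ℝ (Vfield d σ p t y₀) := by
    have : (fun x : Euc d => (-(st ^ 2)⁻¹ * (p x * K d st (y₀ - α • x))) • innerSL ℝ (y₀ - α • x))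
        = fun x : Euc d => innerSL ℝ ((-(st ^ 2)⁻¹ * (p x * K d st (y₀ - α • x)))
            • (y₀ - α • x)) := by
      funext x
      rw [_root_.map_smul]
    rw [this, ContinuousLinearMap.integral_comp_comm (innerSL ℝ (E := Euc d))
      (integrable_Vint hp0 hpm hp1 hσ ht y₀)]
    rfl
  rw [hasGradientAt_iff_hasFDerivAt]
  have htd : (InnerProductSpace.toDual ℝ (Euc d)) (Vfield d σ p t y₀)
      = innerSL ℝ (Vfield d σ p t y₀) := by
    apply ContinuousLinearMap.ext
    intro v
    rw [InnerProductSpace.toDual_apply_apply]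
    rfl
  rw [htd, ← hint_eq, hptf]
  exact key

end
end DST3

namespace DST4
open DST DST2 DST3

variable {d : ℕ} {p : Euc d → ℝ} (hp0 : ∀ x, 0 ≤ p x) (hpm : Measurable p)
  (hp1 : (∫ x, p x) = 1) {σ t : ℝ} (hσ : 0 < σ) (ht : 0 < t)

include hp0 hpm hp1 hσ ht in
lemma score_eq (y : Euc d) :
    score d σ p t y = (ptDensity d σ p t y)⁻¹ • Vfield d σ p t y := by
  have hgrad := hasGradientAt_pt hp0 hpm hp1 hσ ht y
  have hpos := pt_pos hp0 hpm hp1 hσ ht y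
  have hlog : HasGradientAt (fun y => Real.log (ptDensity d σ p t y))
      ((ptDensity d σ p t y)⁻¹ • Vfield d σ p t y) y := by
    rw [hasGradientAt_iff_hasFDerivAt] at hgrad ⊢
    have hl := hgrad.log hpos.ne'
    refine hl.congr_fderiv ?_
    simp [_root_.map_smul]
  exact hlog.gradient

lemma measurable_score : Measurable (score d σ p t) := by
  unfold score gradient
  exact ((InnerProductSpace.toDual ℝ (Euc d)).symm.continuous.measurable).comp
    (measurable_fderiv ℝ _)

include hp0 hpm hp1 hσ ht in
/-- The key pointwise identity `p_t(y) • s⋆(y) = ∇ p_t(y)`. -/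
lemma pt_smul_score (y : Euc d) :
    ptDensity d σ p t y • score d σ p t y = Vfield d σ p t y := by
  rw [score_eq hp0 hpm hp1 hσ ht y, smul_smul,
    mul_inv_cancel₀ (pt_pos hp0 hpm hp1 hσ ht y).ne', one_smul]

end DST4



namespace DST5
open DST DST2 DST3 DST4

variable {d : ℕ}

local notation "⟪" x ", " y "⟫" => @inner ℝ _ _ x y

lemma integral_comp_smul_add (f : Euc d → ℝ) {R : ℝ} (hR : 0 < R) (c : Euc d) :
    ∫ z : Euc d, f (R • z + c) = ((R : ℝ) ^ d)⁻¹ * ∫ y, f y := by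
  have h1 : ∫ z : Euc d, f (R • z + c) = ∫ z : Euc d, (fun u => f (u + c)) (R • z) := rfl
  rw [h1, MeasureTheory.Measure.integral_comp_smul volume (fun u => f (u + c)) R,
    integral_add_right_eq_self (μ := volume) f c, finrank_euclideanSpace_fin,
    smul_eq_mul, abs_of_nonneg (by positivity)]

lemma integrable_comp_smul_add (f : Euc d → ℝ) {R : ℝ} (hR : R ≠ 0) (c : Euc d)
    (h : Integrable (fun z : Euc d => f (R • z + c))) : Integrable f := by
  have h2 : Integrable (fun u : Euc d => f (u + c)) := by
    have : (fun z : Euc d => f (R • z + c)) = fun z : Euc d => (fun u => f (u + c)) (R • z) := rfl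
    rw [this] at h
    exact (MeasureTheory.integrable_comp_smul_iff volume (fun u => f (u + c)) hR).1 h
  have h3 : (fun u : Euc d => f (u + c)) = f ∘ (fun u : Euc d => u + c) := rfl
  rw [h3] at h2
  exact ((measurePreserving_add_right (volume : Measure (Euc d)) c).integrable_comp_emb
    (MeasurableEquiv.addRight c).measurableEmbedding).1 h2

set_option maxHeartbeats 2000000 in
theorem denoising_score_trick
    (d : ℕ) (hd : 1 ≤ d) (σ t : ℝ) (hσ : 0 < σ) (ht : 0 < t)
    (p : Euc d → ℝ) (hp : IsProbDensity d p)
    (hscore_int : Integrable (fun xz : Euc d × Euc d =>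
      ‖score d σ p t (Real.exp (-t) • xz.1 + sigmaT σ t • xz.2)‖ ^ 2 *
        (p xz.1 * gaussDensity d xz.2))) :
    ∃ C : ℝ, ∀ s : Euc d → Euc d, Measurable s →
      Integrable (fun xz : Euc d × Euc d =>
        ‖s (Real.exp (-t) • xz.1 + sigmaT σ t • xz.2)‖ ^ 2 *
          (p xz.1 * gaussDensity d xz.2)) →
      (∫ xz : Euc d × Euc d,
          ‖score d σ p t (Real.exp (-t) • xz.1 + sigmaT σ t • xz.2)
              - s (Real.exp (-t) • xz.1 + sigmaT σ t • xz.2)‖ ^ 2 *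
            (p xz.1 * gaussDensity d xz.2))
        = (∫ xz : Euc d × Euc d,
            ‖s (Real.exp (-t) • xz.1 + sigmaT σ t • xz.2) + (sigmaT σ t)⁻¹ • xz.2‖ ^ 2 *
              (p xz.1 * gaussDensity d xz.2)) + C := by
  obtain ⟨hp0, hpm, hp1⟩ := hp
  set st := sigmaT σ t with hst_def
  have hst : 0 < st := sigmaT_pos hσ ht
  set α := Real.exp (-t) with hα
  set a := score d σ p t with ha_def
  have ham : Measurable a := measurable_score
  -- the weight and some basic integrability facts
  set w : Euc d × Euc d → ℝ := fun q => p q.1 * gaussDensity d q.2 with hw_def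
  have hw0 : ∀ q, 0 ≤ w q := fun q => mul_nonneg (hp0 q.1) (gauss_nonneg d q.2)
  have hwm : Measurable w := (hpm.comp measurable_fst).mul
    ((gauss_continuous d).measurable.comp measurable_snd)
  have hTm : Measurable (fun q : Euc d × Euc d => α • q.1 + st • q.2) :=
    (measurable_fst.const_smul α).add (measurable_snd.const_smul st)
  have hb_int : Integrable (fun q : Euc d × Euc d => ‖(st)⁻¹ • q.2‖ ^ 2 * w q) := by
    have h1 : Integrable (fun z : Euc d => (st⁻¹) ^ 2 * (‖z‖ ^ 2 * gaussDensity d z)) :=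
      (integrable_normsq_gauss d).const_mul _
    have h2 := (integrable_p hp1).mul_prod h1
    rw [Measure.volume_eq_prod]
    refine h2.congr (Filter.Eventually.of_forall fun q => ?_)
    simp only [hw_def, norm_smul, Real.norm_eq_abs, mul_pow,
      abs_of_nonneg (by positivity : (0:ℝ) ≤ st⁻¹)]
    ring
  refine ⟨(∫ q : Euc d × Euc d, ‖a (α • q.1 + st • q.2)‖ ^ 2 * w q)
    - (∫ q : Euc d × Euc d, ‖(st)⁻¹ • q.2‖ ^ 2 * w q), ?_⟩
  intro s hsm hs_int
  show (∫ q : Euc d × Euc d, ‖a (α • q.1 + st • q.2) - s (α • q.1 + st • q.2)‖ ^ 2 * w q)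
      = (∫ q : Euc d × Euc d, ‖s (α • q.1 + st • q.2) + (st)⁻¹ • q.2‖ ^ 2 * w q)
        + ((∫ q : Euc d × Euc d, ‖a (α • q.1 + st • q.2)‖ ^ 2 * w q)
          - ∫ q : Euc d × Euc d, ‖(st)⁻¹ • q.2‖ ^ 2 * w q)
  -- the cross term
  set Φ : Euc d × Euc d → ℝ := fun q =>
    ⟪s (α • q.1 + st • q.2), a (α • q.1 + st • q.2) + st⁻¹ • q.2⟫ * w q with hΦ_def
  have hΦmeas : AEStronglyMeasurable Φ (volume : Measure (Euc d × Euc d)) := by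
    apply Measurable.aestronglyMeasurable
    exact ((hsm.comp hTm).inner ((ham.comp hTm).add (measurable_snd.const_smul st⁻¹))).mul hwm
  have hΦ_int : Integrable Φ := by
    have hmaj : Integrable (fun q : Euc d × Euc d =>
        2⁻¹ * (‖s (α • q.1 + st • q.2)‖ ^ 2 * w q)
        + (‖a (α • q.1 + st • q.2)‖ ^ 2 * w q) + (‖(st)⁻¹ • q.2‖ ^ 2 * w q)) :=
      ((hs_int.const_mul 2⁻¹).add hscore_int).add hb_int
    refine hmaj.mono' hΦmeas (Filter.Eventually.of_forall fun q => ?_)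
    rw [Real.norm_eq_abs, hΦ_def, abs_mul, abs_of_nonneg (hw0 q)]
    have h1 := abs_real_inner_le_norm (s (α • q.1 + st • q.2))
      (a (α • q.1 + st • q.2) + st⁻¹ • q.2)
    have h2 := norm_add_le (a (α • q.1 + st • q.2)) ((st)⁻¹ • q.2)
    have hwq := hw0 q
    have key : |⟪s (α • q.1 + st • q.2), a (α • q.1 + st • q.2) + st⁻¹ • q.2⟫|
        ≤ 2⁻¹ * ‖s (α • q.1 + st • q.2)‖ ^ 2 + ‖a (α • q.1 + st • q.2)‖ ^ 2
          + ‖(st)⁻¹ • q.2‖ ^ 2 := by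
      nlinarith [sq_nonneg (‖s (α • q.1 + st • q.2)‖ - ‖a (α • q.1 + st • q.2) + st⁻¹ • q.2‖),
        sq_nonneg (‖a (α • q.1 + st • q.2)‖ - ‖(st)⁻¹ • q.2‖),
        norm_nonneg (a (α • q.1 + st • q.2)), norm_nonneg ((st)⁻¹ • q.2),
        norm_nonneg (s (α • q.1 + st • q.2)),
        norm_nonneg (a (α • q.1 + st • q.2) + st⁻¹ • q.2)]
    calc |⟪s (α • q.1 + st • q.2), a (α • q.1 + st • q.2) + st⁻¹ • q.2⟫| * w q
        ≤ (2⁻¹ * ‖s (α • q.1 + st • q.2)‖ ^ 2 + ‖a (α • q.1 + st • q.2)‖ ^ 2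
            + ‖(st)⁻¹ • q.2‖ ^ 2) * w q := mul_le_mul_of_nonneg_right key hwq
      _ = 2⁻¹ * (‖s (α • q.1 + st • q.2)‖ ^ 2 * w q)
          + ‖a (α • q.1 + st • q.2)‖ ^ 2 * w q + ‖(st)⁻¹ • q.2‖ ^ 2 * w q := by ring
  -- change of variables: Φ as a function of (x, y)
  set Ψ : Euc d → Euc d → ℝ := fun x y =>
    ⟪s y, a y + (st ^ 2)⁻¹ • (y - α • x)⟫ * (p x * K d st (y - α • x)) with hΨ_def
  have hstd : (0:ℝ) < st ^ d := by positivity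
  have hCV : ∀ x z : Euc d, Φ (x, z) = st ^ d * Ψ x (st • z + α • x) := by
    intro x z
    have e1 : st • z + α • x - α • x = st • z := by abel
    have e2 : (st ^ 2)⁻¹ • (st • z) = st⁻¹ • z := by
      rw [smul_smul]
      congr 1
      rw [sq]
      field_simp
    have e3 : st ^ d * (p x * K d st (st • z)) = p x * gaussDensity d z := by
      unfold K gaussDensity
      rw [c1_eq hst]
      rw [norm_smul, Real.norm_eq_abs, abs_of_nonneg hst.le, mul_pow]
      have e4 : -(st ^ 2 * ‖z‖ ^ 2) / (2 * st ^ 2) = -‖z‖ ^ 2 / 2 := by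
        rw [div_eq_div_iff (by positivity) (by norm_num)]
        ring
      rw [e4]
      field_simp
    have e5 : α • x + st • z = st • z + α • x := by abel
    simp only [hΨ_def, hΦ_def, hw_def, e1, e2, e5]
    rw [← e3]
    ring
  have hCVint : ∀ x : Euc d, (∫ z, Φ (x, z)) = ∫ y, Ψ x y := by
    intro x
    have : (fun z : Euc d => Φ (x, z)) = fun z : Euc d => st ^ d * Ψ x (st • z + α • x) :=
      funext fun z => hCV x z
    rw [this, integral_const_mul, integral_comp_smul_add (Ψ x) hst (α • x)]
    field_simp
  have hCVabs : ∀ x : Euc d, (∫ z, |Φ (x, z)|) = ∫ y, |Ψ x y| := by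
    intro x
    have : (fun z : Euc d => |Φ (x, z)|) = fun z : Euc d => st ^ d * |Ψ x (st • z + α • x)| := by
      funext z; rw [hCV x z, abs_mul, abs_of_nonneg hstd.le]
    rw [this, integral_const_mul, integral_comp_smul_add (fun y => |Ψ x y|) hst (α • x)]
    field_simp
  -- product integrability of Ψ
  have hΨmeas : AEStronglyMeasurable (Function.uncurry Ψ)
      ((volume : Measure (Euc d)).prod (volume : Measure (Euc d))) := by
    rw [← Measure.volume_eq_prod]
    apply Measurable.aestronglyMeasurable
    have hsub : Measurable (fun q : Euc d × Euc d => q.2 - α • q.1) :=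
      measurable_snd.sub (measurable_fst.const_smul α)
    exact (((hsm.comp measurable_snd).inner ((ham.comp measurable_snd).add
      (hsub.const_smul (st ^ 2)⁻¹))).mul
      ((hpm.comp measurable_fst).mul ((K_cont (d := d) (st := st)).measurable.comp hsub)))
  have hΦ_int' : Integrable Φ ((volume : Measure (Euc d)).prod (volume : Measure (Euc d))) := by
    rwa [← Measure.volume_eq_prod]
  have hΨ_int : Integrable (Function.uncurry Ψ)
      ((volume : Measure (Euc d)).prod (volume : Measure (Euc d))) := by
    rw [MeasureTheory.integrable_prod_iff hΨmeas]
    simp only [Function.uncurry_apply_pair]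
    constructor
    · filter_upwards [hΦ_int'.prod_right_ae] with x hx
      have h1 : Integrable (fun z : Euc d => st ^ d * Ψ x (st • z + α • x)) := by
        refine hx.congr (Filter.Eventually.of_forall fun z => ?_)
        exact hCV x z
      have h2 : Integrable (fun z : Euc d => Ψ x (st • z + α • x)) := by
        have h3 := h1.const_mul (st ^ d)⁻¹
        refine h3.congr (Filter.Eventually.of_forall fun z => ?_)
        field_simp
      exact integrable_comp_smul_add (Ψ x) hst.ne' (α • x) h2
    · have heq : (fun x : Euc d => ∫ y, ‖Ψ x y‖) = fun x : Euc d => ∫ z, ‖Φ (x, z)‖ := by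
        funext x
        simp only [Real.norm_eq_abs]
        exact (hCVabs x).symm
      rw [heq]
      exact hΦ_int'.integral_norm_prod_left
  -- the per-`y` cancellation
  have hcancel : ∀ y : Euc d, (∫ x, Ψ x y) = 0 := by
    intro y
    have hf1 : Integrable (fun x : Euc d => (p x * K d st (y - α • x)) • a y) :=
      (integrable_pK hp0 hpm hp1 hst α y).smul_const (a y)
    have hf2 : Integrable (fun x : Euc d =>
        ((st ^ 2)⁻¹ * (p x * K d st (y - α • x))) • (y - α • x)) := by
      have h4 := (integrable_Vint hp0 hpm hp1 hσ ht y).neg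
      refine h4.congr (Filter.Eventually.of_forall fun x => ?_)
      show -((-(st ^ 2)⁻¹ * (p x * K d st (y - α • x))) • (y - α • x)) = _
      rw [← neg_smul]
      congr 1
      ring
    have hrw : (fun x : Euc d => Ψ x y) = fun x : Euc d =>
        ⟪s y, (p x * K d st (y - α • x)) • a y
          + ((st ^ 2)⁻¹ * (p x * K d st (y - α • x))) • (y - α • x)⟫ := by
      funext x
      simp only [hΨ_def]
      rw [inner_add_right, inner_add_right, real_inner_smul_right,
        real_inner_smul_right, real_inner_smul_right]
      ring
    rw [hrw, integral_inner (f := fun x : Euc d => (p x * K d st (y - α • x)) • a y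
        + ((st ^ 2)⁻¹ * (p x * K d st (y - α • x))) • (y - α • x)) (hf1.add hf2) (s y),
      integral_add hf1 hf2, integral_smul_const, ← ptDensity_eq d σ p t y]
    have hV : (∫ x : Euc d, ((st ^ 2)⁻¹ * (p x * K d st (y - α • x))) • (y - α • x))
        = - Vfield d σ p t y := by
      have hVdef : Vfield d σ p t y = ∫ x : Euc d,
          (-(st ^ 2)⁻¹ * (p x * K d st (y - α • x))) • (y - α • x) := by
        unfold Vfield
        rw [← hst_def, ← hα]
      rw [hVdef, ← integral_neg]
      congr 1
      funext x
      show _ = -((-(st ^ 2)⁻¹ * (p x * K d st (y - α • x))) • (y - α • x))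
      rw [← neg_smul]
      congr 1
      ring
    rw [hV]
    have := pt_smul_score hp0 hpm hp1 hσ ht y
    rw [← ha_def] at this
    rw [this]
    simp
  -- the cross term vanishes
  have hJ : (∫ q : Euc d × Euc d, Φ q) = 0 := by
    rw [Measure.volume_eq_prod, MeasureTheory.integral_prod _ hΦ_int']
    have h5 : (∫ x : Euc d, ∫ z : Euc d, Φ (x, z)) = ∫ x : Euc d, ∫ y : Euc d, Ψ x y := by
      congr 1
      funext x
      exact hCVint x
    rw [h5, MeasureTheory.integral_integral_swap hΨ_int]
    simp [hcancel]
  -- integrability of the right-hand side integrand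
  have hsb_int : Integrable (fun q : Euc d × Euc d =>
      ‖s (α • q.1 + st • q.2) + (st)⁻¹ • q.2‖ ^ 2 * w q) := by
    have hmaj : Integrable (fun q : Euc d × Euc d =>
        2 * (‖s (α • q.1 + st • q.2)‖ ^ 2 * w q) + 2 * (‖(st)⁻¹ • q.2‖ ^ 2 * w q)) :=
      (hs_int.const_mul 2).add (hb_int.const_mul 2)
    refine hmaj.mono' ?_ (Filter.Eventually.of_forall fun q => ?_)
    · exact (((hsm.comp hTm).add (measurable_snd.const_smul st⁻¹)).norm.pow_const 2).mul
        hwm |>.aestronglyMeasurable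
    · rw [Real.norm_eq_abs, abs_of_nonneg (mul_nonneg (by positivity) (hw0 q))]
      have h2 := norm_add_le (s (α • q.1 + st • q.2)) ((st)⁻¹ • q.2)
      have hwq := hw0 q
      have key : ‖s (α • q.1 + st • q.2) + (st)⁻¹ • q.2‖ ^ 2
          ≤ 2 * ‖s (α • q.1 + st • q.2)‖ ^ 2 + 2 * ‖(st)⁻¹ • q.2‖ ^ 2 := by
        nlinarith [sq_nonneg (‖s (α • q.1 + st • q.2)‖ - ‖(st)⁻¹ • q.2‖),
          norm_nonneg (s (α • q.1 + st • q.2)), norm_nonneg ((st)⁻¹ • q.2),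
          norm_nonneg (s (α • q.1 + st • q.2) + (st)⁻¹ • q.2)]
      calc ‖s (α • q.1 + st • q.2) + (st)⁻¹ • q.2‖ ^ 2 * w q
          ≤ (2 * ‖s (α • q.1 + st • q.2)‖ ^ 2 + 2 * ‖(st)⁻¹ • q.2‖ ^ 2) * w q :=
            mul_le_mul_of_nonneg_right key hwq
        _ = 2 * (‖s (α • q.1 + st • q.2)‖ ^ 2 * w q) + 2 * (‖(st)⁻¹ • q.2‖ ^ 2 * w q) := by
            ring
  -- the pointwise expansion
  have hpoint : (fun q : Euc d × Euc d =>
      ‖a (α • q.1 + st • q.2) - s (α • q.1 + st • q.2)‖ ^ 2 * w q)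
      = fun q : Euc d × Euc d =>
        (‖s (α • q.1 + st • q.2) + (st)⁻¹ • q.2‖ ^ 2 * w q
          + ‖a (α • q.1 + st • q.2)‖ ^ 2 * w q)
        - (‖(st)⁻¹ • q.2‖ ^ 2 * w q + 2 * Φ q) := by
    funext q
    simp only [hΦ_def]
    rw [norm_sub_sq_real, norm_add_sq_real, inner_add_right]
    rw [real_inner_comm (a (α • q.1 + st • q.2)) (s (α • q.1 + st • q.2))]
    ring
  have hintsub := integral_sub (μ := (volume : Measure (Euc d × Euc d)))
    (f := fun q : Euc d × Euc d => ‖s (α • q.1 + st • q.2) + (st)⁻¹ • q.2‖ ^ 2 * w q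
        + ‖a (α • q.1 + st • q.2)‖ ^ 2 * w q)
    (g := fun q : Euc d × Euc d => ‖(st)⁻¹ • q.2‖ ^ 2 * w q + 2 * Φ q)
    (hsb_int.add hscore_int) (hb_int.add (hΦ_int.const_mul 2))
  have h6 := integral_add (μ := (volume : Measure (Euc d × Euc d)))
    (f := fun q : Euc d × Euc d => ‖s (α • q.1 + st • q.2) + (st)⁻¹ • q.2‖ ^ 2 * w q)
    (g := fun q : Euc d × Euc d => ‖a (α • q.1 + st • q.2)‖ ^ 2 * w q)
    hsb_int hscore_int
  have h7 := integral_add (μ := (volume : Measure (Euc d × Euc d)))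
    (f := fun q : Euc d × Euc d => ‖(st)⁻¹ • q.2‖ ^ 2 * w q)
    (g := fun q : Euc d × Euc d => 2 * Φ q)
    hb_int (hΦ_int.const_mul 2)
  rw [hpoint, hintsub, h6, h7, integral_const_mul, hJ]
  ring

end DST5

/-- **Denoising score trick (Theorem 2, Vincent).**
Expectations with respect to the pair `(X, Z)` with `X ∼ p⋆(x)dx` independent of
`Z ∼ N(0, I_d)` are written as integrals against the joint density
`p⋆(x) g_d(z)`, and `X_t = e^{-t} X + σ_t Z`.  Under square-integrability of the
true score along `X_t`, there is a constant `C` (depending only on `p⋆`, `σ_t` and `d`)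
such that for every measurable square-integrable candidate score `s`,
`E‖s⋆(t, X_t) - s(X_t)‖² = E‖s(X_t) + Z/σ_t‖² + C`. -/
theorem denoising_score_trick
    (d : ℕ) (hd : 1 ≤ d) (σ t : ℝ) (hσ : 0 < σ) (ht : 0 < t)
    (p : Euc d → ℝ) (hp : IsProbDensity d p)
    (hscore_int : Integrable (fun xz : Euc d × Euc d =>
      ‖score d σ p t (Real.exp (-t) • xz.1 + sigmaT σ t • xz.2)‖ ^ 2 *
        (p xz.1 * gaussDensity d xz.2))) :
    ∃ C : ℝ, ∀ s : Euc d → Euc d, Measurable s →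
      Integrable (fun xz : Euc d × Euc d =>
        ‖s (Real.exp (-t) • xz.1 + sigmaT σ t • xz.2)‖ ^ 2 *
          (p xz.1 * gaussDensity d xz.2)) →
      (∫ xz : Euc d × Euc d,
          ‖score d σ p t (Real.exp (-t) • xz.1 + sigmaT σ t • xz.2)
              - s (Real.exp (-t) • xz.1 + sigmaT σ t • xz.2)‖ ^ 2 *
            (p xz.1 * gaussDensity d xz.2))
        = (∫ xz : Euc d × Euc d,
            ‖s (Real.exp (-t) • xz.1 + sigmaT σ t • xz.2) + (sigmaT σ t)⁻¹ • xz.2‖ ^ 2 *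
              (p xz.1 * gaussDensity d xz.2)) + C :=
  DST5.denoising_score_trick d hd σ t hσ ht p hp hscore_int

end
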